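/- There exists a finitely generated group G containing an abelian subgroup of finite index (i.e., G is virtually abelian) such that for every finite symmetric generating set A of G, the geodesic language Geo(G,A) is not piecewise excluding. -/

import Mathlib

/-- `w` is a word over the alphabet `A`: every letter of `w` lies in `A`. -/
def IsWordOver {G : Type*} (A : Finset G) (w : List G) : Prop :=
  ∀ x ∈ w, x ∈ A

/-- `A` is a finite symmetric (inverse-closed) generating set of the group `G`. -/
def IsSymmGen {G : Type*} [Group G] (A : Finset G) : Prop :=
  Subgroup.closure (A : Set G) = ⊤ ∧ ∀ a ∈ A, a⁻¹ ∈ A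

/-- `w` is a geodesic word over `A`: no word over `A` of strictly smaller length
evaluates to the same element of `G`. -/
def IsGeodesic {G : Type*} [Group G] (A : Finset G) (w : List G) : Prop :=
  IsWordOver A w ∧
    ∀ v : List G, IsWordOver A v → v.prod = w.prod → w.length ≤ v.length

/-- The geodesic language of `G` over `A`. -/
def Geo {G : Type*} [Group G] (A : Finset G) : Set (List G) :=
  {w | IsGeodesic A w}

/-- A language `L` of words over `A` is piecewise excluding if there is a finite set `F`
of words over `A` such that a word `w` over `A` lies in `L` iff no element of `F` is a
piecewise subword (i.e. a not-necessarily-contiguous subsequence) of `w`. -/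
def PiecewiseExcluding {G : Type*} (A : Finset G) (L : Set (List G)) : Prop :=
  ∃ F : Finset (List G), (∀ u ∈ F, IsWordOver A u) ∧
    ∀ w : List G, IsWordOver A w → (w ∈ L ↔ ∀ u ∈ F, ¬ List.Sublist u w)

/-- `G` is finitely generated, virtually abelian, and its geodesic language is not
piecewise excluding for any finite symmetric generating set. -/
def IsVirtuallyAbelianWithNoPEGeodesicLanguage (G : Type) [Group G] : Prop :=
  Group.FG G ∧
  (∃ H : Subgroup G, (∀ x y : H, x * y = y * x) ∧ H.FiniteIndex) ∧
  ∀ A : Finset G, IsSymmGen A → ¬ PiecewiseExcluding A (Geo A)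

namespace NoPEaux
open DihedralGroup
abbrev zc : ZMod 0 → ℤ := fun x => x
abbrev cz : ℤ → ZMod 0 := fun x => x

variable {Γ : Type} [Group Γ]

theorem exists_word {A : Finset Γ} (hgen : Subgroup.closure (A : Set Γ) = ⊤)
    (hinv : ∀ a ∈ A, a⁻¹ ∈ A) (g : Γ) :
    ∃ L : ℕ, ∃ w : List Γ, IsWordOver A w ∧ w.prod = g ∧ w.length = L := by
  suffices h : ∃ w : List Γ, IsWordOver A w ∧ w.prod = g by
    obtain ⟨w, h1, h2⟩ := h; exact ⟨w.length, w, h1, h2, rfl⟩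
  have hg : g ∈ Subgroup.closure (A : Set Γ) := by rw [hgen]; trivial
  induction hg using Subgroup.closure_induction with
  | mem x hx =>
      refine ⟨[x], ?_, by simp⟩
      intro y hy; simp only [List.mem_singleton] at hy; subst hy; exact hx
  | one => exact ⟨[], by intro y hy; simp at hy, by simp⟩
  | mul x y hx hy ihx ihy =>
      obtain ⟨w1, h1, h2⟩ := ihx; obtain ⟨w2, h3, h4⟩ := ihy
      refine ⟨w1 ++ w2, ?_, by simp [h2, h4]⟩
      intro z hz; rcases List.mem_append.mp hz with h | h
      exacts [h1 z h, h3 z h]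
  | inv x hx ihx =>
      obtain ⟨w, h1, h2⟩ := ihx
      refine ⟨(w.map fun z => z⁻¹).reverse, ?_, by rw [← List.prod_inv_reverse, h2]⟩
      intro z hz
      simp only [List.mem_reverse, List.mem_map] at hz
      obtain ⟨y, hy, rfl⟩ := hz
      exact hinv y (h1 y hy)

noncomputable def nrm {A : Finset Γ} (hgen : Subgroup.closure (A : Set Γ) = ⊤)
    (hinv : ∀ a ∈ A, a⁻¹ ∈ A) (g : Γ) : ℕ :=
  @Nat.find _ (Classical.decPred _) (exists_word hgen hinv g)

theorem nrm_spec {A : Finset Γ} (hgen : Subgroup.closure (A : Set Γ) = ⊤)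
    (hinv : ∀ a ∈ A, a⁻¹ ∈ A) (g : Γ) :
    ∃ w : List Γ, IsWordOver A w ∧ w.prod = g ∧ w.length = nrm hgen hinv g :=
  @Nat.find_spec _ (Classical.decPred _) (exists_word hgen hinv g)

theorem nrm_min {A : Finset Γ} (hgen : Subgroup.closure (A : Set Γ) = ⊤)
    (hinv : ∀ a ∈ A, a⁻¹ ∈ A) {g : Γ} {w : List Γ}
    (hw : IsWordOver A w) (hp : w.prod = g) : nrm hgen hinv g ≤ w.length :=
  @Nat.find_le _ _ (Classical.decPred _) (exists_word hgen hinv g) ⟨w, hw, hp, rfl⟩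

theorem nrm_le_one {A : Finset Γ} (hgen : Subgroup.closure (A : Set Γ) = ⊤)
    (hinv : ∀ a ∈ A, a⁻¹ ∈ A) {a : Γ} (ha : a ∈ A) : nrm hgen hinv a ≤ 1 := by
  have := nrm_min hgen hinv (g := a) (w := [a])
    (by intro y hy; simp only [List.mem_singleton] at hy; subst hy; exact ha) (by simp)
  simpa using this

theorem nrm_mul {A : Finset Γ} (hgen : Subgroup.closure (A : Set Γ) = ⊤)
    (hinv : ∀ a ∈ A, a⁻¹ ∈ A) (g h : Γ) :
    nrm hgen hinv (g * h) ≤ nrm hgen hinv g + nrm hgen hinv h := by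
  obtain ⟨w1, a1, b1, c1⟩ := nrm_spec hgen hinv g
  obtain ⟨w2, a2, b2, c2⟩ := nrm_spec hgen hinv h
  have := nrm_min hgen hinv (g := g * h) (w := w1 ++ w2)
    (by intro z hz; rcases List.mem_append.mp hz with hh | hh; exacts [a1 z hh, a2 z hh])
    (by simp [b1, b2])
  simpa [c1, c2] using this

/-- action of the infinite dihedral group on ℚ -/
def act : DihedralGroup 0 → ℚ → ℚ
  | .r i, q => q + (zc i : ℚ)
  | .sr i, q => -q - (zc i : ℚ)

theorem act_mul (g h : DihedralGroup 0) (q : ℚ) : act (g * h) q = act g (act h q) := by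
  rcases g with i | i <;> rcases h with j | j <;>
    simp only [r_mul_r, r_mul_sr, sr_mul_r, sr_mul_sr, act] <;>
    · show (_ : ℚ) = _
      push_cast [show ∀ a b : ZMod 0, zc (a+b) = zc a + zc b from fun _ _ => rfl,
        show ∀ a b : ZMod 0, zc (a-b) = zc a - zc b from fun _ _ => rfl]
      ring

theorem act_one (q : ℚ) : act 1 q = q := by
  show act (.r 0) q = q
  simp [act, show zc 0 = 0 from rfl]

theorem inv_r (i : ZMod 0) : (r i : DihedralGroup 0)⁻¹ = r (-i) := rfl
theorem inv_sr (i : ZMod 0) : (sr i : DihedralGroup 0)⁻¹ = sr i := rfl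

theorem conj_r (c X : ZMod 0) :
    (r c : DihedralGroup 0) * sr X * (r c)⁻¹ = sr (X - 2 * c) := by
  rw [inv_r, r_mul_sr, sr_mul_r]; ring_nf

theorem conj_sr (m X : ZMod 0) :
    (sr m : DihedralGroup 0) * sr X * (sr m)⁻¹ = sr (2 * m - X) := by
  rw [inv_sr, sr_mul_sr, r_mul_sr]; ring_nf

def rotSub : Subgroup (DihedralGroup 0) where
  carrier := {g | ∃ i, g = r i}
  one_mem' := ⟨0, rfl⟩
  mul_mem' := by rintro a b ⟨i, rfl⟩ ⟨j, rfl⟩; exact ⟨i + j, rfl⟩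
  inv_mem' := by rintro a ⟨i, rfl⟩; exact ⟨-i, rfl⟩

def littleSub (m : ZMod 0) : Subgroup (DihedralGroup 0) where
  carrier := {g | g = 1 ∨ g = sr m}
  one_mem' := Or.inl rfl
  mul_mem' := by
    rintro a b (rfl | rfl) (rfl | rfl)
    · exact Or.inl (one_mul 1)
    · rw [one_mul]; exact Or.inr rfl
    · rw [mul_one]; exact Or.inr rfl
    · left; rw [sr_mul_sr, sub_self]; rfl
  inv_mem' := by
    rintro a (rfl | rfl)
    · exact Or.inl inv_one
    · exact Or.inr (inv_sr m)

def isSrB : DihedralGroup 0 → Bool := fun g => match g with | .r _ => false | .sr _ => true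
def coordZ : DihedralGroup 0 → ℤ := fun g => match g with | .r i => zc i | .sr i => zc i

def srCoords (A : Finset (DihedralGroup 0)) : Finset ℤ :=
  (A.filter (fun g => isSrB g)).image coordZ

theorem mem_srCoords {A : Finset (DihedralGroup 0)} {m : ℤ} :
    m ∈ srCoords A ↔ sr (cz m) ∈ A := by
  constructor
  · intro h
    obtain ⟨g, hg, hc⟩ := Finset.mem_image.mp h
    obtain ⟨hgA, hgs⟩ := Finset.mem_filter.mp hg
    rcases g with i | i
    · simp [isSrB] at hgs
    · have : cz m = i := by rw [← hc]; rfl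
      rwa [this]
  · intro h
    exact Finset.mem_image.mpr ⟨sr (cz m), Finset.mem_filter.mpr ⟨h, rfl⟩, rfl⟩

def rotAbs (A : Finset (DihedralGroup 0)) : Finset ℤ :=
  insert 0 ((A.filter (fun g => !isSrB g)).image (fun g => |coordZ g|))

theorem rotAbs_mem {A : Finset (DihedralGroup 0)} {i : ZMod 0} (h : r i ∈ A) :
    |zc i| ∈ rotAbs A :=
  Finset.mem_insert_of_mem (Finset.mem_image.mpr ⟨r i, Finset.mem_filter.mpr ⟨h, rfl⟩, rfl⟩)

theorem disp_word {A : Finset (DihedralGroup 0)} {B p : ℚ}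
    (hd : ∀ x ∈ A, |act x p - p| ≤ B) :
    ∀ w : List (DihedralGroup 0), IsWordOver A w → |act w.prod p - p| ≤ B * w.length := by
  intro w
  induction w with
  | nil => intro _; simp [act_one]
  | cons x t ih =>
      intro hw
      have hx : x ∈ A := hw x List.mem_cons_self
      have ht : IsWordOver A t := fun y hy => hw y (List.mem_cons_of_mem x hy)
      have iso : ∀ u v : ℚ, |act x u - act x v| = |u - v| := by
        intro u v; rcases x with i | i <;> simp only [act]
        · ring_nf
        · rw [show (-u - (zc i : ℚ)) - (-v - (zc i : ℚ)) = v - u by ring, abs_sub_comm]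
      calc |act (x :: t).prod p - p| = |act (x * t.prod) p - p| := by rw [List.prod_cons]
        _ = |act x (act t.prod p) - p| := by rw [act_mul]
        _ ≤ |act x (act t.prod p) - act x p| + |act x p - p| := abs_sub_le _ _ _
        _ ≤ |act t.prod p - p| + B := add_le_add (le_of_eq (iso _ _)) (hd x hx)
        _ ≤ B * t.length + B := add_le_add (ih ht) le_rfl
        _ = B * (x :: t).length := by
            rw [List.length_cons]; push_cast; ring

theorem nrm_lower {A : Finset (DihedralGroup 0)} (hgen : Subgroup.closure (A : Set (DihedralGroup 0)) = ⊤)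
    (hinv : ∀ a ∈ A, a⁻¹ ∈ A) {B p : ℚ}
    (hd : ∀ x ∈ A, |act x p - p| ≤ B) (X : ZMod 0) :
    |(zc X : ℚ) + 2 * p| ≤ B * nrm hgen hinv (sr X) := by
  obtain ⟨w, h1, h2, h3⟩ := nrm_spec hgen hinv (sr X)
  have hdw := disp_word hd w h1
  rw [h2, h3] at hdw
  have he : act (sr X) p - p = -((zc X : ℚ) + 2 * p) := by simp only [act]; ring
  rwa [he, abs_neg] at hdw


theorem notPE (A : Finset (DihedralGroup 0)) (hA : IsSymmGen A) :
    ¬ PiecewiseExcluding A (Geo A) := by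
  obtain ⟨hgen, hinv⟩ := hA
  intro hPE
  obtain ⟨F, hFA, hF⟩ := hPE
  by_cases P : ∃ a ∈ A, ∃ v : DihedralGroup 0,
      nrm hgen hinv (a * v * a⁻¹) = nrm hgen hinv v + 2
  · -- a geodesic word with a non-geodesic piecewise subword
    obtain ⟨a, ha, v, hv⟩ := P
    obtain ⟨u, hu1, hu2, hu3⟩ := nrm_spec hgen hinv v
    have hwA : IsWordOver A (a :: (u ++ [a⁻¹])) := by
      intro x hx
      simp only [List.mem_cons, List.mem_append, List.mem_singleton,
        List.not_mem_nil, or_false] at hx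
      rcases hx with rfl | hx | rfl
      · exact ha
      · exact hu1 x hx
      · exact hinv a ha
    have hwprod : (a :: (u ++ [a⁻¹])).prod = a * v * a⁻¹ := by
      simp [hu2, mul_assoc]
    have hwgeo : (a :: (u ++ [a⁻¹])) ∈ Geo A := by
      refine ⟨hwA, fun v' hv' hp' => ?_⟩
      have h1 := nrm_min hgen hinv hv' (by rw [hp', hwprod])
      have hlen : (a :: (u ++ [a⁻¹])).length = nrm hgen hinv v + 2 := by
        simp [hu3]
      rw [hlen, ← hv]; exact h1
    have hbadA : IsWordOver A [a, a⁻¹] := by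
      intro x hx
      simp only [List.mem_cons, List.mem_singleton, List.not_mem_nil, or_false] at hx
      rcases hx with rfl | rfl
      exacts [ha, hinv a ha]
    have hbad : [a, a⁻¹] ∉ Geo A := by
      intro hg
      have := hg.2 [] (by intro x hx; simp at hx) (by simp)
      simp at this
    have h1 := (hF _ hwA).mp hwgeo
    have h3 : ¬ ∀ u' ∈ F, ¬ List.Sublist u' [a, a⁻¹] := fun hcon => hbad ((hF _ hbadA).mpr hcon)
    push_neg at h3
    obtain ⟨f, hfF, hfsub⟩ := h3
    exact h1 f hfF (hfsub.trans
      (List.Sublist.cons₂ a ((List.nil_sublist u).append (List.Sublist.refl [a⁻¹]))))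
  · -- otherwise, conjugation by generators increases length by at most one:
    -- derive a contradiction with the displacement bound
    push_neg at P
    have H1 : ∀ a ∈ A, ∀ v : DihedralGroup 0,
        nrm hgen hinv (a * v * a⁻¹) ≤ nrm hgen hinv v + 1 := by
      intro a ha v
      have k1 := nrm_mul hgen hinv (a * v) a⁻¹
      have k2 := nrm_mul hgen hinv a v
      have k3 := nrm_le_one hgen hinv ha
      have k4 := nrm_le_one hgen hinv (hinv a ha)
      have k5 := P a ha v
      omega
    -- the set of reflections in A is nonempty
    have hMne : (srCoords A).Nonempty := by
      rw [Finset.nonempty_iff_ne_empty]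
      intro hM
      have hsub : (A : Set (DihedralGroup 0)) ⊆ (rotSub : Set (DihedralGroup 0)) := by
        intro g hg
        rcases g with i | i
        · exact ⟨i, rfl⟩
        · exfalso
          have : zc i ∈ srCoords A := mem_srCoords.mpr (by exact hg)
          rw [hM] at this; simp at this
      have hsr0 : (sr 0 : DihedralGroup 0) ∈ rotSub := by
        have h := (Subgroup.closure_le rotSub).mpr hsub
        rw [hgen] at h
        exact h (Subgroup.mem_top _)
      obtain ⟨i, hi⟩ := hsr0
      exact absurd hi (by simp)
    set M := srCoords A with hMdef
    set mp := M.max' hMne with hmpd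
    set mm := M.min' hMne with hmmd
    have hmmle : mm ≤ mp := M.min'_le _ (M.max'_mem hMne)
    have hsrmp : sr (cz mp) ∈ A := mem_srCoords.mp (M.max'_mem hMne)
    have hsrmm : sr (cz mm) ∈ A := mem_srCoords.mp (M.min'_mem hMne)
    set p : ℚ := -((mp : ℚ) + (mm : ℚ)) / 4 with hpd
    set cstar := (rotAbs A).max' ⟨0, Finset.mem_insert_self _ _⟩ with hcstd
    have hcst0 : (0:ℤ) ≤ cstar := Finset.le_max' _ 0 (Finset.mem_insert_self _ _)
    set B : ℚ := max (cstar : ℚ) (((mp : ℚ) - (mm : ℚ)) / 2) with hBd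
    have hB1 : (cstar : ℚ) ≤ B := le_max_left _ _
    have hB2 : ((mp : ℚ) - (mm : ℚ)) / 2 ≤ B := le_max_right _ _
    have hB0 : 0 ≤ B := le_trans (by exact_mod_cast hcst0) hB1
    -- letter displacement bound
    have hdisp : ∀ x ∈ A, |act x p - p| ≤ B := by
      intro x hx
      rcases x with i | i
      · have h1 : |zc i| ≤ cstar := Finset.le_max' _ _ (rotAbs_mem hx)
        have h2 : act (r i) p - p = (zc i : ℚ) := by simp only [act]; ring
        rw [h2]
        calc |(zc i : ℚ)| = ((|zc i| : ℤ) : ℚ) := by push_cast; rfl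
          _ ≤ (cstar : ℚ) := by exact_mod_cast h1
          _ ≤ B := hB1
      · have h1 : zc i ∈ M := mem_srCoords.mpr (by exact hx)
        have h2 : mm ≤ zc i := M.min'_le _ h1
        have h3 : zc i ≤ mp := M.le_max' _ h1
        have h2' : (mm : ℚ) ≤ (zc i : ℚ) := by exact_mod_cast h2
        have h3' : (zc i : ℚ) ≤ (mp : ℚ) := by exact_mod_cast h3
        have h4 : act (sr i) p - p = -(zc i : ℚ) - 2 * p := by simp only [act]; ring
        rw [h4]
        rw [abs_le]
        constructor
        · rw [hpd]
          have := hB2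
          nlinarith [hB2]
        · rw [hpd]
          nlinarith [hB2]
    -- length of sr X at least |X + 2p| / B
    have lower := fun X => nrm_lower hgen hinv hdisp X
    have hf0 : nrm hgen hinv (sr (cz mp)) ≤ 1 := nrm_le_one hgen hinv hsrmp
    by_cases hcs : mp - mm ≤ 2 * cstar
    · -- B = cstar; move right by 2 * cstar twice using a translation generator
      have hBeq : B = (cstar : ℚ) := by
        rw [hBd, max_eq_left]
        have : ((mp : ℚ) - mm) ≤ 2 * (cstar : ℚ) := by exact_mod_cast hcs
        linarith
      rcases eq_or_lt_of_le hcst0 with hc0 | hcpos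
      · -- degenerate: A ⊆ {1, sr (cz mp)}, cannot generate
        exfalso
        have hmpmm : mp = mm := by
          have h1 : (0:ℤ) ≤ mp - mm := by omega
          omega
        have hsub : (A : Set (DihedralGroup 0)) ⊆ (littleSub (cz mp) : Set (DihedralGroup 0)) := by
          intro g hg
          rcases g with i | i
          · left
            have h1 : |zc i| ≤ cstar := Finset.le_max' _ _ (rotAbs_mem hg)
            have h2 : zc i = 0 := by
              have := le_abs_self (zc i); have := neg_abs_le (zc i); omega
            have h3 : i = 0 := by
              have := congrArg cz h2; exact this
            rw [h3]; rfl
          · right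
            have h1 : zc i ∈ M := mem_srCoords.mpr (by exact hg)
            have h2 : mm ≤ zc i := M.min'_le _ h1
            have h3 : zc i ≤ mp := M.le_max' _ h1
            have h4 : zc i = mp := by omega
            have h5 : i = cz mp := by
              have := congrArg cz h4; exact this
            rw [h5]
        have hr1 : (r 1 : DihedralGroup 0) ∈ littleSub (cz mp) := by
          have h := (Subgroup.closure_le (littleSub (cz mp))).mpr hsub
          rw [hgen] at h
          exact h (Subgroup.mem_top _)
        rcases hr1 with h | h
        · rw [one_def] at h
          have : (1 : ZMod 0) = 0 := by injection h
          exact absurd this (by decide)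
        · exact absurd h (by simp)
      · -- cstar ≥ 1; get a translation generator of size cstar
        have hwit : cstar ∈ rotAbs A := Finset.max'_mem _ _
        rcases Finset.mem_insert.mp hwit with h0 | hwit'
        · omega
        · obtain ⟨g, hg, hgc⟩ := Finset.mem_image.mp hwit'
          obtain ⟨hgA, hgr⟩ := Finset.mem_filter.mp hg
          rcases g with i0 | i0
          swap
          · simp [isSrB] at hgr
          have hi0 : |zc i0| = cstar := hgc
          -- choose c with r c ∈ A and zc c = -cstar
          obtain ⟨c, hcA, hcz⟩ : ∃ c : ZMod 0, r c ∈ A ∧ zc c = -cstar := by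
            rcases abs_choice (zc i0) with h | h
            · rw [h] at hi0
              refine ⟨-i0, ?_, ?_⟩
              · have := hinv _ hgA; rwa [inv_r] at this
              · show -zc i0 = -cstar
                omega
            · rw [h] at hi0
              exact ⟨i0, hgA, by omega⟩
          have t1 := H1 _ hcA (sr (cz mp))
          rw [conj_r] at t1
          have t2 := H1 _ hcA (sr (cz mp - 2 * c))
          rw [conj_r] at t2
          have hle3 : nrm hgen hinv (sr (cz mp - 2 * c - 2 * c)) ≤ 3 := by omega
          have hlow := lower (cz mp - 2 * c - 2 * c)
          have hz : zc (cz mp - 2 * c - 2 * c) = mp + 4 * cstar := by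
            show mp - 2 * zc c - 2 * zc c = mp + 4 * cstar
            omega
          rw [hz] at hlow
          have hval : ((mp + 4 * cstar : ℤ) : ℚ) + 2 * p
              = 4 * (cstar : ℚ) + ((mp : ℚ) - mm) / 2 := by
            rw [hpd]; push_cast; ring
          have habs : ((mp + 4 * cstar : ℤ) : ℚ) + 2 * p ≤ |((mp + 4 * cstar : ℤ) : ℚ) + 2 * p| :=
            le_abs_self _
          have hmul : B * (nrm hgen hinv (sr (cz mp - 2 * c - 2 * c)) : ℚ) ≤ B * 3 := by
            apply mul_le_mul_of_nonneg_left _ hB0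
            exact_mod_cast hle3
          have hmm' : (mm : ℚ) ≤ (mp : ℚ) := by exact_mod_cast hmmle
          have hcpos' : (1 : ℚ) ≤ (cstar : ℚ) := by exact_mod_cast hcpos
          rw [hBeq] at hmul
          nlinarith [hlow, habs, hval, hmul]
    · -- B = (mp - mm)/2 > cstar; bounce between the extreme reflections
      push_neg at hcs
      have hD : (0:ℤ) < mp - mm := by omega
      have hBeq : B = ((mp : ℚ) - mm) / 2 := by
        rw [hBd, max_eq_right]
        have : (2 * (cstar:ℤ) : ℚ) ≤ ((mp : ℤ) - mm : ℤ) := by exact_mod_cast le_of_lt hcs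
        push_cast at this ⊢
        linarith
      have t1 := H1 _ hsrmm (sr (cz mp))
      rw [conj_sr] at t1
      have t2 := H1 _ hsrmp (sr (2 * cz mm - cz mp))
      rw [conj_sr] at t2
      have hle3 : nrm hgen hinv (sr (2 * cz mp - (2 * cz mm - cz mp))) ≤ 3 := by omega
      have hlow := lower (2 * cz mp - (2 * cz mm - cz mp))
      have hz : zc (2 * cz mp - (2 * cz mm - cz mp)) = 3 * mp - 2 * mm := by
        show 2 * mp - (2 * mm - mp) = 3 * mp - 2 * mm
        ring
      rw [hz] at hlow
      have hval : ((3 * mp - 2 * mm : ℤ) : ℚ) + 2 * p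
          = (5 / 2) * ((mp : ℚ) - mm) := by
        rw [hpd]; push_cast; ring
      have habs : ((3 * mp - 2 * mm : ℤ) : ℚ) + 2 * p ≤ |((3 * mp - 2 * mm : ℤ) : ℚ) + 2 * p| :=
        le_abs_self _
      have hmul : B * (nrm hgen hinv (sr (2 * cz mp - (2 * cz mm - cz mp))) : ℚ) ≤ B * 3 := by
        apply mul_le_mul_of_nonneg_left _ hB0
        exact_mod_cast hle3
      have hD' : (0 : ℚ) < (mp : ℚ) - mm := by exact_mod_cast hD
      rw [hBeq] at hmul
      nlinarith [hlow, habs, hval, hmul]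

def parity : DihedralGroup 0 →* ℤˣ where
  toFun := fun g => match g with | .r _ => 1 | .sr _ => -1
  map_one' := rfl
  map_mul' := by
    rintro (i | i) (j | j) <;>
      simp only [r_mul_r, r_mul_sr, sr_mul_r, sr_mul_sr] <;> norm_num

theorem r_one_zpow (m : ℤ) : (r 1 : DihedralGroup 0) ^ m = r (cz m) := by
  induction m using Int.induction_on with
  | zero => rfl
  | succ k ih =>
      rw [zpow_add_one, ih, r_mul_r]
      rfl
  | pred k ih =>
      rw [zpow_sub_one, ih, inv_r, r_mul_r]
      rfl

theorem closure_pair : Subgroup.closure ({r 1, sr 0} : Set (DihedralGroup 0)) = ⊤ := by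
  rw [eq_top_iff]
  rintro (i | i) -
  · have : (r 1 : DihedralGroup 0) ∈ Subgroup.closure ({r 1, sr 0} : Set (DihedralGroup 0)) :=
      Subgroup.subset_closure (by simp)
    have h2 := zpow_mem this (zc i)
    rwa [r_one_zpow, show cz (zc i) = i from rfl] at h2
  · have h1 : (sr 0 : DihedralGroup 0) ∈ Subgroup.closure ({r 1, sr 0} : Set (DihedralGroup 0)) :=
      Subgroup.subset_closure (by simp)
    have h2 : (r 1 : DihedralGroup 0) ∈ Subgroup.closure ({r 1, sr 0} : Set (DihedralGroup 0)) :=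
      Subgroup.subset_closure (by simp)
    have h3 := mul_mem h1 (zpow_mem h2 (zc i))
    rwa [r_one_zpow, show cz (zc i) = i from rfl, sr_mul_r, zero_add] at h3


end NoPEaux


theorem DihedralFG : Group.FG (DihedralGroup 0) :=
  Group.fg_iff.mpr ⟨{DihedralGroup.r 1, DihedralGroup.sr 0}, NoPEaux.closure_pair,
    Set.toFinite _⟩

theorem ker_rot {x : DihedralGroup 0} (hx : x ∈ NoPEaux.parity.ker) :
    ∃ i, x = DihedralGroup.r i := by
  rcases x with i | i
  · exact ⟨i, rfl⟩
  · exfalso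
    rw [MonoidHom.mem_ker] at hx
    exact absurd (show (-1 : ℤˣ) = 1 from hx) (by decide)

/-- There is a finitely generated virtually abelian group whose geodesic language is not
piecewise excluding for any finite symmetric generating set. -/
theorem exists_virtually_abelian_not_piecewise_excluding :
    ∃ (G : Type) (instG : Group G),
      @IsVirtuallyAbelianWithNoPEGeodesicLanguage G instG := by
  refine ⟨DihedralGroup 0, inferInstance, DihedralFG, ?_, fun A hA => NoPEaux.notPE A hA⟩
  refine ⟨NoPEaux.parity.ker, ?_, ?_⟩
  · rintro ⟨x, hx⟩ ⟨y, hy⟩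
    obtain ⟨i, rfl⟩ := ker_rot hx
    obtain ⟨j, rfl⟩ := ker_rot hy
    apply Subtype.ext
    show DihedralGroup.r i * DihedralGroup.r j = DihedralGroup.r j * DihedralGroup.r i
    rw [DihedralGroup.r_mul_r, DihedralGroup.r_mul_r, add_comm]
  · constructor
    rw [Subgroup.index_ker]
    have h1 : Nonempty NoPEaux.parity.range := ⟨1⟩
    exact Nat.card_pos.ne'
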